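/- The set of almost quantum distributions is closed under post-selection: if P(a₁,...,aₙ|x₁,...,xₙ) is almost quantum and P(a₁|x₁) > 0, then the conditional distribution P(a₂,...,aₙ|x₁,...,xₙ,a₁) := P(a₁,...,aₙ|x̄)/P(a₁|x₁) is an almost quantum (n−1)-partite distribution. -/

import Mathlib

/-- Ordered product of operators applied to a vector. -/
def seqApply {H : Type*} [AddCommMonoid H] [Module ℂ H] {n : ℕ}
    (T : Fin n → (H →ₗ[ℂ] H)) (v : H) : H :=
  (List.ofFn T).foldr (fun f w => f w) v

/-- An almost quantum representation of an `n`-partite distribution `P`. -/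
structure AQRep {n : ℕ} {A X : Type*} [Fintype A]
    (P : (Fin n → A) → (Fin n → X) → ℝ) where
  H : Type
  [instN : NormedAddCommGroup H]
  [instI : InnerProductSpace ℂ H]
  φ : H
  E : Fin n → A → X → (H →ₗ[ℂ] H)
  norm_φ : ‖φ‖ = 1
  idem : ∀ k a x, E k a x ∘ₗ E k a x = E k a x
  selfAdj : ∀ k a x (v w : H), (inner ℂ ((E k a x) v) w : ℂ) = inner ℂ v ((E k a x) w)
  complete : ∀ k x, ∑ a, E k a x = (LinearMap.id : H →ₗ[ℂ] H)
  perm : ∀ (a : Fin n → A) (x : Fin n → X) (π : Equiv.Perm (Fin n)),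
    seqApply (fun i => E (π i) (a (π i)) (x (π i))) φ = seqApply (fun i => E i (a i) (x i)) φ
  prob : ∀ a x, (P a x : ℂ) = inner ℂ φ (seqApply (fun i => E i (a i) (x i)) φ)

/-- `P` is almost quantum iff it admits an almost quantum representation. -/
def IsAlmostQuantum {n : ℕ} {A X : Type*} [Fintype A]
    (P : (Fin n → A) → (Fin n → X) → ℝ) : Prop :=
  Nonempty (AQRep P)

lemma foldr_apply_smul {H : Type*} [AddCommMonoid H] [Module ℂ H]
    (l : List (H →ₗ[ℂ] H)) (c : ℂ) (v : H) :
    l.foldr (fun f w => f w) (c • v) = c • l.foldr (fun f w => f w) v := by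
  induction l with
  | nil => rfl
  | cons f l ih => simp [ih, map_smul]

lemma seqApply_smul {H : Type*} [AddCommMonoid H] [Module ℂ H] {n : ℕ}
    (T : Fin n → (H →ₗ[ℂ] H)) (c : ℂ) (v : H) :
    seqApply T (c • v) = c • seqApply T v :=
  foldr_apply_smul _ _ _

lemma seqApply_snoc {H : Type*} [AddCommMonoid H] [Module ℂ H] {n : ℕ}
    (T : Fin n → (H →ₗ[ℂ] H)) (S : H →ₗ[ℂ] H) (v : H) :
    seqApply (Fin.snoc T S) v = seqApply T (S v) := by
  unfold seqApply
  rw [List.ofFn_succ']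
  simp [List.foldr_concat]

lemma seqApply_cons {H : Type*} [AddCommMonoid H] [Module ℂ H] {n : ℕ}
    (T : Fin (n+1) → (H →ₗ[ℂ] H)) (v : H) :
    seqApply T v = T 0 (seqApply (fun i => T i.succ) v) := by
  unfold seqApply; rw [List.ofFn_succ]; rfl

lemma seqApply_sum_complete {H : Type*} [AddCommMonoid H] [Module ℂ H]
    {A : Type*} [Fintype A] :
    ∀ {m : ℕ} (F : Fin m → A → (H →ₗ[ℂ] H)),
      (∀ k, ∑ a, F k a = LinearMap.id) →
      ∀ v : H, ∑ a : Fin m → A, seqApply (fun i => F i (a i)) v = v := by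
  intro m
  induction m with
  | zero =>
    intro F _ v
    haveI : Unique (Fin 0 → A) := ⟨⟨Fin.elim0⟩, fun f => funext fun i => i.elim0⟩
    rw [Fintype.sum_unique]
    rfl
  | succ m ih =>
    intro F hF v
    rw [← (Fin.consEquiv (fun _ : Fin (m+1) => A)).sum_comp]
    rw [Fintype.sum_prod_type]
    have key : ∀ (b : A) (a' : Fin m → A),
        seqApply (fun i => F i ((Fin.consEquiv (fun _ : Fin (m+1) => A)) (b, a') i)) v
          = F 0 b (seqApply (fun i => F i.succ (a' i)) v) := by
      intro b a'
      rw [seqApply_cons]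
      simp [Fin.consEquiv]
    simp_rw [key, ← map_sum, ih (fun i => F i.succ) (fun k => hF k.succ) v,
      ← LinearMap.sum_apply, hF 0]
    rfl

/-- the almost quantum set is closed under post-selection.  If the
`(n+1)`-partite distribution `P` is almost quantum, `marg a₁ x₁` is the marginal
probability that party 1 obtains outcome `a₁` on input `x₁` (well defined by
no-signalling), and `marg a₁ x₁ > 0`, then the conditional distribution of the remaining
`n` parties given party 1's input `x₁` and outcome `a₁` is almost quantum. -/
theorem almostQuantum_closed_postselection
    {n : ℕ} {A X : Type*} [Fintype A]
    (P : (Fin (n + 1) → A) → (Fin (n + 1) → X) → ℝ)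
    (hP : IsAlmostQuantum P)
    (marg : A → X → ℝ)
    (hmarg : ∀ (a₁ : A) (x₁ : X) (x : Fin n → X),
      ∑ a : Fin n → A, P (Fin.cons a₁ a) (Fin.cons x₁ x) = marg a₁ x₁)
    (a₁ : A) (x₁ : X) (hpos : 0 < marg a₁ x₁) :
    IsAlmostQuantum (fun (a : Fin n → A) (x : Fin n → X) =>
      P (Fin.cons a₁ a) (Fin.cons x₁ x) / marg a₁ x₁) := by
  obtain ⟨R⟩ := hP
  letI := R.instN
  letI := R.instI
  set E0 : R.H →ₗ[ℂ] R.H := R.E 0 a₁ x₁ with hE0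
  set u : R.H := E0 R.φ with hu
  have hidem : ∀ w : R.H, E0 (E0 w) = E0 w := by
    intro w
    have := congrArg (fun f : R.H →ₗ[ℂ] R.H => f w) (R.idem 0 a₁ x₁)
    simpa using this
  -- key permutation fact
  have key : ∀ (π : Equiv.Perm (Fin n)) (a : Fin n → A) (x : Fin n → X),
      seqApply (fun i : Fin n => R.E (π i).succ (a (π i)) (x (π i))) u
        = seqApply (fun j : Fin (n+1) =>
            R.E j ((Fin.cons a₁ a : Fin (n+1) → A) j) ((Fin.cons x₁ x : Fin (n+1) → X) j)) R.φ := by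
    intro π a x
    set σ : Equiv.Perm (Fin (n+1)) :=
      (finRotate (n+1)).trans (Equiv.Perm.decomposeFin.symm (0, π)) with hσ
    have hσcast : ∀ i : Fin n, σ i.castSucc = (π i).succ := by
      intro i
      have h1 : finRotate (n+1) i.castSucc = i.succ := finRotate_of_lt i.isLt
      simp [hσ, Equiv.trans_apply, h1]
    have hσlast : σ (Fin.last n) = 0 := by
      simp [hσ, Equiv.trans_apply, finRotate_last]
    have hfun : (Fin.snoc (fun i : Fin n => R.E (π i).succ (a (π i)) (x (π i))) E0
          : Fin (n+1) → (R.H →ₗ[ℂ] R.H))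
        = fun j => R.E (σ j) ((Fin.cons a₁ a : Fin (n+1) → A) (σ j)) ((Fin.cons x₁ x : Fin (n+1) → X) (σ j)) := by
      funext j
      refine Fin.lastCases ?_ (fun i => ?_) j
      · rw [Fin.snoc_last, hσlast]
        simp [hE0]
      · rw [Fin.snoc_castSucc, hσcast]
        simp
    calc seqApply (fun i : Fin n => R.E (π i).succ (a (π i)) (x (π i))) u
        = seqApply (Fin.snoc (fun i : Fin n => R.E (π i).succ (a (π i)) (x (π i))) E0) R.φ := by
          rw [seqApply_snoc]
      _ = seqApply (fun j => R.E (σ j) ((Fin.cons a₁ a : Fin (n+1) → A) (σ j)) ((Fin.cons x₁ x : Fin (n+1) → X) (σ j))) R.φ := by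
          rw [hfun]
      _ = _ := R.perm ((Fin.cons a₁ a : Fin (n+1) → A)) ((Fin.cons x₁ x : Fin (n+1) → X)) σ
  -- the full sequential product decomposes
  have hconsseq : ∀ (a : Fin n → A) (x : Fin n → X),
      seqApply (fun j : Fin (n+1) => R.E j ((Fin.cons a₁ a : Fin (n+1) → A) j) ((Fin.cons x₁ x : Fin (n+1) → X) j)) R.φ
        = E0 (seqApply (fun i : Fin n => R.E i.succ (a i) (x i)) R.φ) := by
    intro a x
    rw [seqApply_cons]
    simp [hE0]
  -- marg = ‖u‖²
  have hmargC : (marg a₁ x₁ : ℂ) = inner ℂ R.φ u := by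
    rw [← hmarg a₁ x₁ (fun _ => x₁)]
    push_cast
    have : ∀ a : Fin n → A,
        (P ((Fin.cons a₁ a : Fin (n+1) → A)) (Fin.cons x₁ (fun _ => x₁)) : ℂ)
          = inner ℂ R.φ (E0 (seqApply (fun i : Fin n => R.E i.succ (a i) x₁) R.φ)) := by
      intro a
      rw [R.prob, hconsseq a (fun _ => x₁)]
    simp_rw [this, ← inner_sum, ← map_sum]
    rw [seqApply_sum_complete (fun i b => R.E i.succ b x₁)
      (fun k => R.complete k.succ x₁) R.φ]
  have hinner_uu : (inner ℂ u u : ℂ) = inner ℂ R.φ u := by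
    rw [hu, R.selfAdj 0 a₁ x₁]
    rw [show R.E 0 a₁ x₁ (E0 R.φ) = E0 R.φ from hidem R.φ]
  have hmarg_norm : marg a₁ x₁ = ‖u‖ ^ 2 := by
    have : (marg a₁ x₁ : ℂ) = ((‖u‖ ^ 2 : ℝ) : ℂ) := by
      rw [hmargC, ← hinner_uu, inner_self_eq_norm_sq_to_K]
      norm_cast
    exact_mod_cast this
  have hcpos : (0:ℝ) < ‖u‖ := by
    have h2 : (0:ℝ) < ‖u‖ ^ 2 := hmarg_norm ▸ hpos
    nlinarith [norm_nonneg u]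
  have hcne : (‖u‖ : ℂ) ≠ 0 := by
    exact_mod_cast hcpos.ne'
  refine ⟨{
    H := R.H
    instN := R.instN
    instI := R.instI
    φ := ((‖u‖ : ℂ))⁻¹ • u
    E := fun k b y => R.E k.succ b y
    norm_φ := by
      rw [norm_smul]
      simp [norm_inv, hcpos.ne']
    idem := fun k b y => R.idem k.succ b y
    selfAdj := fun k b y v w => R.selfAdj k.succ b y v w
    complete := fun k y => R.complete k.succ y
    perm := by
      intro a x π
      rw [seqApply_smul, seqApply_smul]
      exact congrArg (fun w => ((‖u‖ : ℂ))⁻¹ • w)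
        ((key π a x).trans ((key (Equiv.refl _) a x).symm))
    prob := by
      intro a x
      have hseq : seqApply (fun i : Fin n => R.E i.succ (a i) (x i)) u
          = seqApply (fun j : Fin (n+1) =>
              R.E j ((Fin.cons a₁ a : Fin (n+1) → A) j) ((Fin.cons x₁ x : Fin (n+1) → X) j)) R.φ :=
        key (Equiv.refl _) a x
      have hinner : (inner ℂ u (seqApply (fun i : Fin n => R.E i.succ (a i) (x i)) u) : ℂ)
          = (P ((Fin.cons a₁ a : Fin (n+1) → A)) ((Fin.cons x₁ x : Fin (n+1) → X)) : ℂ) := by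
        rw [hseq, hu, R.selfAdj 0 a₁ x₁, ← hE0, hconsseq a x, hidem, ← hconsseq a x,
          R.prob]
      rw [seqApply_smul, inner_smul_left, inner_smul_right, hinner]
      rw [map_inv₀, Complex.conj_ofReal]
      rw [show ((P ((Fin.cons a₁ a : Fin (n+1) → A)) ((Fin.cons x₁ x : Fin (n+1) → X)) / marg a₁ x₁ : ℝ) : ℂ)
          = (P ((Fin.cons a₁ a : Fin (n+1) → A)) ((Fin.cons x₁ x : Fin (n+1) → X)) : ℂ) / ((marg a₁ x₁ : ℝ) : ℂ) by push_cast; ring]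
      rw [show ((marg a₁ x₁ : ℝ) : ℂ) = ((‖u‖ : ℝ) : ℂ) ^ 2 by
        rw [hmarg_norm]; push_cast; ring]
      ring }⟩
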